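/- For any A ∈ M_j, the unique solution y = (y_1,...,y_j) of A yᵀ = 1ᵀ (where 1 = (1,...,1)) satisfies y_i > 0 for every i, and moreover s · Σ_{i=1}^j y_i < 1, where s = min_{i≠l} a_{i,l} (for j = 1 one has y_1 = 1). -/

import Mathlib

/-- Membership in the class `M_j` of ultrametric matrices from the paper. -/
def MemUltra (η : ℝ) {ι : Type*} [Fintype ι] [DecidableEq ι] (A : Matrix ι ι ℝ) : Prop :=
  A.IsSymm ∧ (∀ i, A i i = 1) ∧
  (∀ i l, i ≠ l → 0 ≤ A i l ∧ A i l ≤ 1 - η) ∧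
  (∀ i l p, i ≠ l → l ≠ p → i ≠ p → min (A l p) (A i p) ≤ A i l)

open Finset

theorem key_ultra (n : ℕ) : ∀ (ι : Type) [Fintype ι] [DecidableEq ι], Fintype.card ι = n →
    ∀ (η : ℝ), 0 < η → ∀ A : Matrix ι ι ℝ, MemUltra η A →
    (∀ y : ι → ℝ, A.mulVec y = 0 → y = 0) ∧
    (∀ y : ι → ℝ, A.mulVec y = (fun _ => 1) →
      (∀ i, 0 < y i) ∧ ∀ s : ℝ, 0 ≤ s → s ≤ 1 - η → (∀ i l, i ≠ l → s ≤ A i l) →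
        s * ∑ i, y i < 1) := by
  induction n using Nat.strong_induction_on with
  | _ n IH =>
  intro ι _ _ hcard η hη A hA
  classical
  obtain ⟨hsym, hdiag, hbd, hultra⟩ := hA
  have hsymm' : ∀ i l : ι, A l i = A i l := fun i l => hsym.apply i l
  rcases Nat.lt_or_ge n 2 with hn2 | hn2
  · -- base cases n = 0, 1
    interval_cases n
    · haveI : IsEmpty ι := Fintype.card_eq_zero_iff.mp hcard
      refine ⟨fun y _ => funext fun i => isEmptyElim i, fun y _ => ⟨fun i => isEmptyElim i, ?_⟩⟩
      intro s _ _ _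
      have : (∑ i, y i) = 0 := by simp
      rw [this, mul_zero]; norm_num
    · obtain ⟨a, ha⟩ := Fintype.card_eq_one_iff.mp hcard
      have huniv : (univ : Finset ι) = {a} := by
        ext b; simp [ha b]
      constructor
      · intro y hy
        have h := congrFun hy a
        simp only [Matrix.mulVec, dotProduct, Pi.zero_apply, huniv, sum_singleton,
          hdiag a, one_mul] at h
        funext b; rw [ha b]; exact h
      · intro y hy
        have h := congrFun hy a
        simp only [Matrix.mulVec, dotProduct, huniv, sum_singleton, hdiag a,
          one_mul] at h
        refine ⟨fun i => by rw [ha i, h]; norm_num, ?_⟩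
        intro s hs0 hsη _
        rw [huniv, sum_singleton, h, mul_one]
        linarith
  · -- main case: n ≥ 2
    haveI hnty : Nonempty ι := Fintype.card_pos_iff.mp (by omega)
    obtain ⟨p₀, q₀, hpq₀⟩ := Fintype.exists_pair_of_one_lt_card (by omega : 1 < Fintype.card ι)
    have hVne : ((univ.filter (fun p : ι × ι => p.1 ≠ p.2)).image
        (fun p : ι × ι => A p.1 p.2)).Nonempty :=
      ⟨A p₀ q₀, mem_image.mpr ⟨(p₀, q₀), mem_filter.mpr ⟨mem_univ _, hpq₀⟩, rfl⟩⟩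
    set s₀ : ℝ := Finset.min' _ hVne with hs₀def
    have hs₀att : ∃ p q : ι, p ≠ q ∧ A p q = s₀ := by
      obtain ⟨⟨p, q⟩, hm, he⟩ := mem_image.mp (Finset.min'_mem _ hVne)
      exact ⟨p, q, (mem_filter.mp hm).2, he⟩
    have hs₀le : ∀ i l : ι, i ≠ l → s₀ ≤ A i l := by
      intro i l h
      exact Finset.min'_le _ _ (mem_image.mpr ⟨(i, l), mem_filter.mpr ⟨mem_univ _, h⟩, rfl⟩)
    obtain ⟨pm, qm, hpmqm, hpmeq⟩ := hs₀att
    have hs₀0 : 0 ≤ s₀ := by rw [← hpmeq]; exact (hbd pm qm hpmqm).1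
    have hs₀η : s₀ ≤ 1 - η := by rw [← hpmeq]; exact (hbd pm qm hpmqm).2
    have hd : 0 < 1 - s₀ := by linarith
    set near : ι → ι → Prop := fun i l => i = l ∨ s₀ < A i l with hneardef
    have hnear_refl : ∀ i, near i i := fun i => Or.inl rfl
    have hnear_symm : ∀ i l, near i l → near l i := by
      intro i l h
      have h' : i = l ∨ s₀ < A i l := h
      rcases h' with h' | h'
      · exact Or.inl h'.symm
      · exact Or.inr (by rwa [hsymm'])
    have hnear_trans : ∀ i l p, near i l → near l p → near i p := by
      intro i l p h1 h2
      have h1' : i = l ∨ s₀ < A i l := h1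
      have h2' : l = p ∨ s₀ < A l p := h2
      rcases h1' with rfl | h1'
      · exact h2
      rcases h2' with rfl | h2'
      · exact Or.inr h1'
      by_cases hip : i = p
      · exact Or.inl hip
      by_cases hil : i = l
      · exact Or.inr (by rw [hil]; exact h2')
      by_cases hlp : l = p
      · exact Or.inr (by rwa [hlp] at h1')
      have hkey := hultra i p l hip (fun h => hlp h.symm) hil
      rw [hsymm' l p] at hkey
      exact Or.inr (lt_of_lt_of_le (lt_min h2' h1') hkey)
    have hfar : ∀ i l, ¬ near i l → A i l = s₀ := by
      intro i l h
      have h' : ¬ (i = l ∨ s₀ < A i l) := h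
      push_neg at h'
      exact le_antisymm h'.2 (hs₀le i l h'.1)
    have hnearpq : ¬ near pm qm := by
      intro h
      have h' : pm = qm ∨ s₀ < A pm qm := h
      rcases h' with h' | h'
      · exact hpmqm h'
      · rw [hpmeq] at h'; exact lt_irrefl _ h'
    -- the auxiliary claim
    have aux : ∀ (y : ι → ℝ) (c : ℝ), (∀ a, A.mulVec y a = c) →
        ∀ i, ((c - s₀ * ∑ l, y l = 0) → y i = 0) ∧
          ((0 < c - s₀ * ∑ l, y l) → 0 < y i) ∧
          ((c - s₀ * ∑ l, y l < 0) → y i < 0) := by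
      intro y c hyc i
      set T : ℝ := ∑ l, y l with hT
      set cb : ℝ := c - s₀ * T with hcbdef
      set S : Finset ι := univ.filter (fun l => near i l) with hS
      have hiS : i ∈ S := mem_filter.mpr ⟨mem_univ i, hnear_refl i⟩
      have hnotboth : pm ∉ S ∨ qm ∉ S := by
        by_contra h
        push_neg at h
        exact hnearpq (hnear_trans _ _ _ (hnear_symm _ _ (mem_filter.mp h.1).2)
          (mem_filter.mp h.2).2)
      have hScard : S.card < n := by
        have hne' : S ≠ univ := by
          intro h
          rcases hnotboth with h' | h'
          · exact h' (h ▸ mem_univ pm)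
          · exact h' (h ▸ mem_univ qm)
        have := Finset.card_lt_card (Finset.ssubset_univ_iff.mpr hne')
        rwa [Finset.card_univ, hcard] at this
      set C : Matrix {x // x ∈ S} {x // x ∈ S} ℝ :=
        fun a b => (A a.1 b.1 - s₀) / (1 - s₀) with hCdef
      have hsub_ne : ∀ a b : {x // x ∈ S}, a ≠ b → a.1 ≠ b.1 :=
        fun a b h h' => h (Subtype.ext h')
      have hC : MemUltra (η / (1 - s₀)) C := by
        refine ⟨?_, ?_, ?_, ?_⟩
        · ext a b
          simp only [Matrix.transpose_apply, hCdef]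
          show (A _ _ - s₀) / (1 - s₀) = _
          rw [hsymm']
        · intro a
          simp only [hCdef, hdiag]
          field_simp
        · intro a b hab
          have h1 := hsub_ne a b hab
          constructor
          · exact div_nonneg (by linarith [hs₀le a.1 b.1 h1]) hd.le
          · have h2 := (hbd a.1 b.1 h1).2
            rw [div_le_iff₀ hd]
            have : (1 - η / (1 - s₀)) * (1 - s₀) = 1 - s₀ - η := by field_simp
            rw [this]
            linarith
        · intro a b p hab hbp hap
          have hmin : min (A b.1 p.1) (A a.1 p.1) ≤ A a.1 b.1 :=
            hultra a.1 b.1 p.1 (hsub_ne _ _ hab) (hsub_ne _ _ hbp) (hsub_ne _ _ hap)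
          simp only [hCdef]
          rw [min_div_div_right hd.le, min_sub_sub_right]
          exact (div_le_div_iff_of_pos_right hd).mpr (by linarith)
      have hIH := IH S.card hScard {x // x ∈ S} (Fintype.card_coe S)
        (η / (1 - s₀)) (div_pos hη hd) C hC
      have key_eq : ∀ a : {x // x ∈ S}, ∑ b : {x // x ∈ S}, (A a.1 b.1 - s₀) * y b.1 = cb := by
        intro a
        have ha := hyc a.1
        simp only [Matrix.mulVec, dotProduct] at ha
        have hsplit := Finset.sum_filter_add_sum_filter_not univ (fun l => near i l)
          (fun l => A a.1 l * y l)
        have hfar' : ∀ l ∈ univ.filter (fun l => ¬ near i l), A a.1 l * y l = s₀ * y l := by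
          intro l hl
          have hnl := (mem_filter.mp hl).2
          have : ¬ near a.1 l := fun h => hnl (hnear_trans _ _ _ (mem_filter.mp a.2).2 h)
          rw [hfar _ _ this]
        have e2 : ∑ l ∈ univ.filter (fun l => ¬ near i l), A a.1 l * y l
            = s₀ * ∑ l ∈ univ.filter (fun l => ¬ near i l), y l := by
          rw [Finset.sum_congr rfl hfar', Finset.mul_sum]
        have e3 := Finset.sum_filter_add_sum_filter_not univ (fun l => near i l) y
        have e4 : (∑ b : {x // x ∈ S}, (A a.1 b.1 - s₀) * y b.1)
            = ∑ l ∈ S, (A a.1 l - s₀) * y l :=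
          Finset.sum_coe_sort S (fun l => (A a.1 l - s₀) * y l)
        have e5 : ∑ l ∈ S, (A a.1 l - s₀) * y l
            = (∑ l ∈ S, A a.1 l * y l) - s₀ * ∑ l ∈ S, y l := by
          rw [Finset.mul_sum, ← Finset.sum_sub_distrib]
          exact Finset.sum_congr rfl (fun l _ => by ring)
        rw [← hS] at hsplit e3
        rw [e4, e5, hcbdef, hT]
        linear_combination hsplit + ha - e2 - s₀ * e3
      have hw : ∀ (hcb : cb ≠ 0),
          C.mulVec (fun b => ((1 - s₀) / cb) * y b.1) = fun _ => 1 := by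
        intro hcb
        funext a
        simp only [Matrix.mulVec, dotProduct, hCdef]
        have : ∀ b : {x // x ∈ S},
            (A a.1 b.1 - s₀) / (1 - s₀) * (((1 - s₀) / cb) * y b.1)
            = (1 / cb) * ((A a.1 b.1 - s₀) * y b.1) := by
          intro b
          field_simp
        rw [Finset.sum_congr rfl (fun b _ => this b), ← Finset.mul_sum, key_eq a]
        field_simp
      have h0 : cb = 0 → C.mulVec (fun b => y b.1) = 0 := by
        intro hcb
        funext a
        simp only [Matrix.mulVec, dotProduct, hCdef, Pi.zero_apply]
        have : ∀ b : {x // x ∈ S},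
            (A a.1 b.1 - s₀) / (1 - s₀) * y b.1
            = (1 / (1 - s₀)) * ((A a.1 b.1 - s₀) * y b.1) := by
          intro b; field_simp
        rw [Finset.sum_congr rfl (fun b _ => this b), ← Finset.mul_sum, key_eq a, hcb, mul_zero]
      refine ⟨?_, ?_, ?_⟩
      · intro hcb
        have := hIH.1 (fun b => y b.1) (h0 hcb)
        exact congrFun this ⟨i, hiS⟩
      · intro hcb
        have hys := (hIH.2 _ (hw (ne_of_gt hcb))).1 ⟨i, hiS⟩
        have hk : 0 < (1 - s₀) / cb := div_pos hd hcb
        by_contra hy'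
        push_neg at hy'
        nlinarith
      · intro hcb
        have hys := (hIH.2 _ (hw (ne_of_lt hcb))).1 ⟨i, hiS⟩
        have hk : (1 - s₀) / cb < 0 := div_neg_of_pos_of_neg hd hcb
        by_contra hy'
        push_neg at hy'
        nlinarith
    constructor
    · intro y hy
      have h := aux y 0 (fun a => congrFun hy a)
      rcases lt_trichotomy (0 - s₀ * ∑ l, y l) 0 with hlt | heq | hgt
      · exfalso
        have hT : (∑ l, y l) < 0 :=
          Finset.sum_neg (fun i _ => (h i).2.2 hlt) univ_nonempty
        nlinarith
      · funext i; exact (h i).1 heq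
      · exfalso
        have hT : 0 < ∑ l, y l :=
          Finset.sum_pos (fun i _ => (h i).2.1 hgt) univ_nonempty
        nlinarith
    · intro y hy
      have h := aux y 1 (fun a => congrFun hy a)
      rcases lt_trichotomy (1 - s₀ * ∑ l, y l) 0 with hlt | heq | hgt
      · exfalso
        have hT : (∑ l, y l) < 0 :=
          Finset.sum_neg (fun i _ => (h i).2.2 hlt) univ_nonempty
        nlinarith
      · exfalso
        have hT : (∑ l, y l) = 0 := Finset.sum_eq_zero (fun i _ => (h i).1 heq)
        rw [hT, mul_zero] at heq
        norm_num at heq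
      · refine ⟨fun i => (h i).2.1 hgt, ?_⟩
        intro s hs0 hsη hslb
        have hT : 0 < ∑ l, y l :=
          Finset.sum_pos (fun i _ => (h i).2.1 hgt) univ_nonempty
        have hss₀ : s ≤ s₀ := by rw [← hpmeq]; exact hslb pm qm hpmqm
        nlinarith

/-- for `A ∈ M_j` (with `j ≥ 2`, `s` the minimal off-diagonal entry),
any solution `y` of `A yᵀ = 1ᵀ` has all coordinates positive and satisfies
`s · Σ yᵢ < 1`.  (For `j = 1` one simply has `y₁ = 1`.) -/
theorem ultrametric_solution_positive {η : ℝ} (hη : 0 < η) {j : ℕ} (hj : 2 ≤ j)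
    (A : Matrix (Fin j) (Fin j) ℝ) (hA : MemUltra η A) (s : ℝ)
    (hs_lb : ∀ i l, i ≠ l → s ≤ A i l)
    (hs_attained : ∃ i l, i ≠ l ∧ A i l = s)
    (y : Fin j → ℝ) (hy : A.mulVec y = fun _ => 1) :
    (∀ i, 0 < y i) ∧ s * ∑ i, y i < 1 := by
  obtain ⟨p, q, hne, heq⟩ := hs_attained
  have hs0 : 0 ≤ s := by rw [← heq]; exact (hA.2.2.1 p q hne).1
  have hs1 : s ≤ 1 - η := by rw [← heq]; exact (hA.2.2.1 p q hne).2
  have K := (key_ultra j (Fin j) (Fintype.card_fin j) η hη A hA).2 y hy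
  exact ⟨K.1, K.2 s hs0 hs1 hs_lb⟩
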